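/- Let G be a connected undirected graph, T a DFS tree of G \ D̂ rooted at r, and D a set of failed vertices with r ∉ D. Define the connectivity graph M on vertex set (D̂ \ D) ∪ {r_C : C internal component of T \ (D \ D̂)} with the six edge types: (1) r_{C1} ~ r_{C2} if a back-edge joins internal components C1, C2; (2) for a hanging subtree H with back-edges to internal components C1,...,Ck where Ck is an ancestor of all others, edges r_{Ck} ~ r_{Ci} for i < k; (3) u1 ~ u2 for u1, u2 ∈ D̂ \ D adjacent in G; (4) r_C ~ u if an edge of G joins u ∈ D̂ \ D to a vertex of internal component C; (5) u1 ~ u2 if both u1, u2 ∈ D̂ \ D are adjacent in G to vertices of a common hanging subtree H; (6) r_C ~ u if some hanging subtree H has a back-edge to internal component C and an edge of G to u ∈ D̂ \ D. Then for any S, S' each being an internal component of T \ (D \ D̂) or a vertex of D̂ \ D, S and S' are connected in G \ D if and only if their representative vertices are connected in M. -/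

import Mathlib

/-- `a` is an ancestor of `b` with respect to the parent function `p`
(a vertex is an ancestor of itself). -/
def IsAnc {V : Type*} (p : V → V) (a b : V) : Prop :=
  Relation.ReflTransGen (fun x y => p x = y) b a

/-- The graph `G` with the vertices of `X` deleted (kept as isolated vertices). -/
def delVerts {V : Type*} (G : SimpleGraph V) (X : Set V) : SimpleGraph V :=
  SimpleGraph.fromRel (fun x y => G.Adj x y ∧ x ∉ X ∧ y ∉ X)

/-- A DFS tree of the subgraph of `G` induced on the vertex set `S`, rooted at `r`:
parent function, DFS (preorder) numbers `num`, descendant counts `nd`.  `dfs_prop` is the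
defining property of depth-first search. -/
structure DFSTreeOn {V : Type*} [Fintype V] (G : SimpleGraph V) (S : Set V) (r : V) where
  parent : V → V
  num : V → ℕ
  nd : V → ℕ
  root_mem : r ∈ S
  parent_root : parent r = r
  parent_mem : ∀ v ∈ S, parent v ∈ S
  num_inj : Function.Injective num
  parent_adj : ∀ v ∈ S, v ≠ r → G.Adj (parent v) v
  parent_num : ∀ v ∈ S, v ≠ r → num (parent v) < num v
  reach_root : ∀ v ∈ S, IsAnc parent r v
  nd_def : ∀ v ∈ S, Set.ncard {u | u ∈ S ∧ IsAnc parent v u} = nd v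
  subtree_interval : ∀ u ∈ S, ∀ v ∈ S,
    (IsAnc parent u v ↔ (num u ≤ num v ∧ num v < num u + nd u))
  dfs_prop : ∀ u ∈ S, ∀ w ∈ S, G.Adj u w → num u < num w → num w < num u + nd u

/-- The tree with parent function `p` on the vertex set `S`, regarded as a graph. -/
def treeGraphOn {V : Type*} (p : V → V) (S : Set V) : SimpleGraph V :=
  SimpleGraph.fromRel (fun x y => x ∈ S ∧ y ∈ S ∧ p x = y)

/-- `C` is a connected component of `T \ X`, for the tree on vertex set `S`. -/
def IsCompOn {V : Type*} (p : V → V) (S X C : Set V) : Prop :=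
  ∃ v ∈ S, v ∉ X ∧ C = {u | (delVerts (treeGraphOn p S) X).Reachable u v}

/-- `rc` is the root of the component `C`. -/
def IsRootOf {V : Type*} (p : V → V) (C : Set V) (rc : V) : Prop :=
  rc ∈ C ∧ ∀ u ∈ C, IsAnc p rc u

/-- Some failed vertex of `X` is a descendant of a vertex of `C`. -/
def IsInternal {V : Type*} (p : V → V) (X C : Set V) : Prop :=
  ∃ f ∈ X, ∃ c ∈ C, IsAnc p c f

/-- `C'` is an ancestor of `C`. -/
def CompAnc {V : Type*} (p : V → V) (C' C : Set V) : Prop :=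
  ∃ a ∈ C', ∃ b ∈ C, IsAnc p a b

/-- `C` is an internal component of `T \ X`. -/
def IsIntC {V : Type*} (p : V → V) (S X C : Set V) : Prop :=
  IsCompOn p S X C ∧ IsInternal p X C

/-- `C` is a hanging subtree of `T \ X`. -/
def IsHang {V : Type*} (p : V → V) (S X C : Set V) : Prop :=
  IsCompOn p S X C ∧ ¬ IsInternal p X C

/-- There is a back-edge (non-tree edge of `G`) with one end in `A` and the other in `B`. -/
def BackE {V : Type*} (G : SimpleGraph V) (p : V → V) (A B : Set V) : Prop :=
  ∃ x ∈ A, ∃ y ∈ B, G.Adj x y ∧ p x ≠ y ∧ p y ≠ x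

/-- Some edge of `G` joins the vertex `u` to the set `A`. -/
def EdgeToSet {V : Type*} (G : SimpleGraph V) (u : V) (A : Set V) : Prop :=
  ∃ x ∈ A, G.Adj u x

/-- The edge relation of the connectivity graph `M`, with the six edge types:
(1) a back-edge between two internal components; (2) a hanging subtree with back-edges to
internal components `C₁, …, C_k`, `C_k` most ancestral, gives edges `(r_{C_k}, r_{C_i})`;
(3) an edge of `G` between two vertices of `U = D̂ \ D`; (4) an edge of `G` between a
vertex of `U` and an internal component; (5) two vertices of `U` joined to a common
hanging subtree; (6) a vertex of `U` and an internal component joined to a common hanging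
subtree. -/
def MRel {V : Type*} (G : SimpleGraph V) (p : V → V) (S X U : Set V) (a b : V) : Prop :=
  (∃ C₁ C₂, IsIntC p S X C₁ ∧ IsIntC p S X C₂ ∧ IsRootOf p C₁ a ∧ IsRootOf p C₂ b ∧
    BackE G p C₁ C₂) ∨
  (∃ H Ck Ci, IsHang p S X H ∧ IsIntC p S X Ck ∧ IsIntC p S X Ci ∧
    IsRootOf p Ck a ∧ IsRootOf p Ci b ∧ BackE G p H Ck ∧ BackE G p H Ci ∧
    (∀ C', IsIntC p S X C' → BackE G p H C' → CompAnc p Ck C')) ∨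
  (a ∈ U ∧ b ∈ U ∧ G.Adj a b) ∨
  (∃ C, IsIntC p S X C ∧ IsRootOf p C a ∧ b ∈ U ∧ EdgeToSet G b C) ∨
  (a ∈ U ∧ b ∈ U ∧ ∃ H, IsHang p S X H ∧ EdgeToSet G a H ∧ EdgeToSet G b H) ∨
  (∃ C H, IsIntC p S X C ∧ IsRootOf p C a ∧ IsHang p S X H ∧ BackE G p C H ∧
    b ∈ U ∧ EdgeToSet G b H)

/-- The connectivity graph `M`. -/
def MGraph {V : Type*} (G : SimpleGraph V) (p : V → V) (S X U : Set V) : SimpleGraph V :=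
  SimpleGraph.fromRel (MRel G p S X U)

/-- `a` is the representative vertex in `M` of `A`, where `A` is either an internal
component of `T \ X` (represented by its root) or a singleton of a vertex of `U`. -/
def IsRep {V : Type*} (p : V → V) (S X U : Set V) (A : Set V) (a : V) : Prop :=
  (IsIntC p S X A ∧ IsRootOf p A a) ∨ (a ∈ U ∧ A = {a})

open Relation

namespace CG

section Gen
variable {V : Type*} {p : V → V}

lemma chain_comp {R1 R2 : V → V → Prop} (f : V → V)
    (h1 : ∀ x y, R1 x y → y = f x) (h2 : ∀ x y, R2 x y → y = f x)
    {b u u' : V} (c1 : ReflTransGen R1 b u) (c2 : ReflTransGen R2 b u') :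
    ReflTransGen R2 u u' ∨ ReflTransGen R1 u' u := by
  induction c1 with
  | refl => exact Or.inl c2
  | @tail m u hbm hmu ih =>
    rcases ih with h | h
    · rcases h.cases_head with rfl | ⟨c, hc, hcu'⟩
      · exact Or.inr (ReflTransGen.single hmu)
      · have hcu : c = u := (h2 _ _ hc).trans (h1 _ _ hmu).symm
        exact Or.inl (hcu ▸ hcu')
    · exact Or.inr (h.tail hmu)

lemma isAnc_refl {a : V} : IsAnc p a a := ReflTransGen.refl

lemma isAnc_trans {a b c : V} (h1 : IsAnc p a b) (h2 : IsAnc p c a) : IsAnc p c b :=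
  ReflTransGen.trans h1 h2

lemma anc_of_anc_root {a r : V} (hr : p r = r) (h : IsAnc p a r) : a = r := by
  induction h with
  | refl => rfl
  | tail _ h2 ih => rw [ih] at h2; rw [← h2]; exact hr

lemma anc_comparable {a b c : V} (h1 : IsAnc p a c) (h2 : IsAnc p b c) :
    IsAnc p a b ∨ IsAnc p b a := by
  rcases chain_comp p (fun x y h => h.symm) (fun x y h => h.symm) h1 h2 with h | h
  · exact Or.inr h
  · exact Or.inl h

lemma anc_strict_step {y t : V} (h : IsAnc p y t) (hne : y ≠ t) : IsAnc p y (p t) := by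
  rcases h.cases_head with rfl | ⟨c, hc, hcy⟩
  · exact absurd rfl hne
  · exact hc ▸ hcy

/-- One step of a clean (avoiding `X`, inside `S`) parent chain. -/
def CStep (p : V → V) (S X : Set V) (x y : V) : Prop :=
  p x = y ∧ x ∈ S ∧ y ∈ S ∧ x ∉ X ∧ y ∉ X

/-- Clean ancestor chain from `v` up to `t`. -/
def Clean (p : V → V) (S X : Set V) (t v : V) : Prop := ReflTransGen (CStep p S X) v t

/-- `t` is the top of the clean chain starting at `v`. -/
def CTop (p : V → V) (S X : Set V) (t v : V) : Prop :=
  Clean p S X t v ∧ (p t ∈ X ∨ p t = t)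

variable {S X : Set V}

lemma Clean.isAnc {t v : V} (h : Clean p S X t v) : IsAnc p t v :=
  ReflTransGen.mono (r := CStep p S X) (fun _ _ hs => hs.1) _ _ h

lemma clean_props {t v : V} (h : Clean p S X t v) (hv : v ∈ S ∧ v ∉ X) :
    t ∈ S ∧ t ∉ X := by
  induction h with
  | refl => exact hv
  | tail _ h2 _ => exact ⟨h2.2.2.1, h2.2.2.2.2⟩

lemma delT_adj {x y : V} :
    (delVerts (treeGraphOn p S) X).Adj x y ↔
      x ≠ y ∧ x ∈ S ∧ y ∈ S ∧ x ∉ X ∧ y ∉ X ∧ (p x = y ∨ p y = x) := by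
  unfold delVerts treeGraphOn
  rw [SimpleGraph.fromRel_adj]
  simp only [SimpleGraph.fromRel_adj]
  constructor
  · rintro ⟨hne, h | h⟩ <;> tauto
  · rintro ⟨hne, hx, hy, hx', hy', h | h⟩
    · exact ⟨hne, Or.inl ⟨⟨hne, Or.inl ⟨hx, hy, h⟩⟩, hx', hy'⟩⟩
    · exact ⟨hne, Or.inl ⟨⟨hne, Or.inr ⟨hy, hx, h⟩⟩, hx', hy'⟩⟩

lemma delG_adj {G : SimpleGraph V} {D : Set V} {x y : V} :
    (delVerts G D).Adj x y ↔ G.Adj x y ∧ x ∉ D ∧ y ∉ D := by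
  unfold delVerts
  rw [SimpleGraph.fromRel_adj]
  constructor
  · rintro ⟨hne, h | h⟩
    · exact h
    · exact ⟨h.1.symm, h.2.2, h.2.1⟩
  · intro h; exact ⟨h.1.ne, Or.inl h⟩

lemma clean_reach {t v : V} (h : Clean p S X t v) :
    (delVerts (treeGraphOn p S) X).Reachable v t := by
  induction h with
  | refl => exact SimpleGraph.Reachable.refl _
  | @tail m t _ h2 ih =>
    by_cases hmt : m = t
    · exact hmt ▸ ih
    · exact ih.trans (SimpleGraph.Adj.reachable
        (delT_adj.mpr ⟨hmt, h2.2.1, h2.2.2.1, h2.2.2.2.1, h2.2.2.2.2, Or.inl h2.1⟩))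

lemma stop_clean_eq {t t' : V} (hstop : p t ∈ X ∨ p t = t) (h : Clean p S X t' t) :
    t' = t := by
  induction h using ReflTransGen.head_induction_on with
  | refl => rfl
  | @head x c hstep _ ih =>
    rcases hstop with hs | hs
    · exact absurd (hstep.1 ▸ hs) hstep.2.2.2.2
    · have hcx : c = x := hstep.1.symm.trans hs
      subst hcx
      exact ih (Or.inr hs)

lemma top_unique {t t' v : V} (h : CTop p S X t v) (h' : CTop p S X t' v) : t = t' := by
  rcases chain_comp (R1 := CStep p S X) (R2 := CStep p S X) p
      (fun x y hs => hs.1.symm) (fun x y hs => hs.1.symm) h.1 h'.1 with hc | hc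
  · exact (stop_clean_eq h.2 hc).symm
  · exact stop_clean_eq h'.2 hc

end Gen
end CG
namespace CG
open Relation
section Gen2
variable {V : Type*} {p : V → V} {S X : Set V}

lemma adj_ctop {x y t : V} (hadj : (delVerts (treeGraphOn p S) X).Adj x y)
    (h : CTop p S X t x) : CTop p S X t y := by
  obtain ⟨hne, hxS, hyS, hxX, hyX, hor⟩ := delT_adj.mp hadj
  rcases hor with hxy | hyx
  · by_cases htx : t = x
    · subst htx
      rcases h.2 with hs | hs
      · exact absurd (hxy ▸ hs) hyX
      · exact absurd (hxy.symm.trans hs).symm hne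
    · rcases h.1.cases_head with heq | ⟨c, hc, hct⟩
      · exact absurd heq.symm htx
      · have : c = y := hc.1.symm.trans hxy
        exact ⟨this ▸ hct, h.2⟩
  · exact ⟨ReflTransGen.head ⟨hyx, hyS, hxS, hyX, hxX⟩ h.1, h.2⟩

lemma reach_ctop {x y t : V} (hr : (delVerts (treeGraphOn p S) X).Reachable x y)
    (h : CTop p S X t x) : CTop p S X t y := by
  rw [SimpleGraph.reachable_iff_reflTransGen] at hr
  induction hr with
  | refl => exact h
  | tail _ h2 ih => exact adj_ctop h2 ih

lemma comp_mem {C : Set V} (hC : IsCompOn p S X C) {u : V} (hu : u ∈ C) :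
    u ∈ S ∧ u ∉ X := by
  obtain ⟨v, hvS, hvX, rfl⟩ := hC
  have hu' : (delVerts (treeGraphOn p S) X).Reachable u v := hu
  rw [SimpleGraph.reachable_iff_reflTransGen] at hu'
  rcases hu'.cases_head with rfl | ⟨c, hc, -⟩
  · exact ⟨hvS, hvX⟩
  · have := delT_adj.mp hc
    exact ⟨this.2.1, this.2.2.2.1⟩

lemma comp_eq {C C' : Set V} (hC : IsCompOn p S X C) (hC' : IsCompOn p S X C')
    {w : V} (hw : w ∈ C) (hw' : w ∈ C') : C = C' := by
  obtain ⟨v, hvS, hvX, rfl⟩ := hC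
  obtain ⟨v', hvS', hvX', rfl⟩ := hC'
  have h1 : (delVerts (treeGraphOn p S) X).Reachable w v := hw
  have h2 : (delVerts (treeGraphOn p S) X).Reachable w v' := hw'
  ext u
  exact ⟨fun h => SimpleGraph.Reachable.trans h (h1.symm.trans h2),
    fun h => SimpleGraph.Reachable.trans h (h2.symm.trans h1)⟩

lemma comp_mem_of_reach {C : Set V} (hC : IsCompOn p S X C) {u w : V} (hu : u ∈ C)
    (h : (delVerts (treeGraphOn p S) X).Reachable w u) : w ∈ C := by
  obtain ⟨v, hvS, hvX, rfl⟩ := hC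
  exact SimpleGraph.Reachable.trans h hu

end Gen2
end CG
namespace CG
open Relation
section Tlem
variable {V : Type*} [Fintype V] {G : SimpleGraph V} {S : Set V} {r : V}
  (T : DFSTreeOn G S r) {X : Set V}

lemma anc_num {a b : V} (hb : b ∈ S) (h : IsAnc T.parent a b) :
    a ∈ S ∧ T.num a ≤ T.num b := by
  unfold IsAnc at h
  revert hb
  induction h using ReflTransGen.head_induction_on with
  | refl => exact fun hb => ⟨hb, le_rfl⟩
  | @head x c hstep htl ih =>
    intro hx
    have hc : c ∈ S := hstep ▸ T.parent_mem x hx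
    obtain ⟨h1, h2⟩ := ih hc
    refine ⟨h1, le_trans h2 ?_⟩
    by_cases hxr : x = r
    · have : c = x := by rw [← hstep, hxr, T.parent_root]
      exact this ▸ le_rfl
    · exact le_of_lt (hstep ▸ T.parent_num x hx hxr)

lemma anc_antisymm {a b : V} (hb : b ∈ S) (h1 : IsAnc T.parent a b)
    (h2 : IsAnc T.parent b a) : a = b := by
  have q1 := anc_num T hb h1
  have q2 := anc_num T q1.1 h2
  exact T.num_inj (le_antisymm q1.2 q2.2)

lemma parent_ne_self {t : V} (ht : t ∈ S) (htr : t ≠ r) : T.parent t ≠ t :=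
  fun h => absurd (h ▸ T.parent_num t ht htr) (lt_irrefl _)

lemma exists_ctop {v : V} (hv : v ∈ S) (hvX : v ∉ X) :
    ∃ t, CTop T.parent S X t v := by
  suffices h : ∀ n v, v ∈ S → v ∉ X → T.num v ≤ n → ∃ t, CTop T.parent S X t v from
    h (T.num v) v hv hvX le_rfl
  intro n
  induction n with
  | zero =>
    intro v hv hvX hn
    by_cases hs : T.parent v ∈ X ∨ T.parent v = v
    · exact ⟨v, ReflTransGen.refl, hs⟩
    · push_neg at hs
      have hvr : v ≠ r := fun h => hs.2 (by rw [h, T.parent_root])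
      have := T.parent_num v hv hvr
      omega
  | succ n ih =>
    intro v hv hvX hn
    by_cases hs : T.parent v ∈ X ∨ T.parent v = v
    · exact ⟨v, ReflTransGen.refl, hs⟩
    · push_neg at hs
      have hvr : v ≠ r := fun h => hs.2 (by rw [h, T.parent_root])
      have hnum := T.parent_num v hv hvr
      obtain ⟨t, ht⟩ := ih (T.parent v) (T.parent_mem v hv) hs.1 (by omega)
      exact ⟨t, ReflTransGen.head ⟨rfl, hv, T.parent_mem v hv, hvX, hs.1⟩ ht.1, ht.2⟩

lemma comp_root {C : Set V} (hC : IsCompOn T.parent S X C) :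
    ∃ rc, rc ∈ C ∧ (∀ u ∈ C, CTop T.parent S X rc u) ∧ IsRootOf T.parent C rc ∧
      (T.parent rc ∈ X ∨ rc = r) := by
  obtain ⟨v, hvS, hvX, hCdef⟩ := hC
  obtain ⟨t, ht⟩ := exists_ctop T hvS hvX
  have hreach : (delVerts (treeGraphOn T.parent S) X).Reachable v t := clean_reach ht.1
  have htC : t ∈ C := by rw [hCdef]; exact hreach.symm
  have htop : ∀ u ∈ C, CTop T.parent S X t u := by
    intro u hu
    rw [hCdef] at hu
    exact reach_ctop ((hu : (delVerts (treeGraphOn T.parent S) X).Reachable u v).symm) ht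
  have htS : t ∈ S ∧ t ∉ X := clean_props ht.1 ⟨hvS, hvX⟩
  refine ⟨t, htC, htop, ⟨htC, fun u hu => Clean.isAnc (htop u hu).1⟩, ?_⟩
  rcases ht.2 with hs | hs
  · exact Or.inl hs
  · right
    by_contra htr
    exact parent_ne_self T htS.1 htr hs

lemma root_unique {C : Set V} (hC : IsCompOn T.parent S X C) {r1 r2 : V}
    (h1 : IsRootOf T.parent C r1) (h2 : IsRootOf T.parent C r2) : r1 = r2 :=
  anc_antisymm T (comp_mem hC h2.1).1 (h1.2 r2 h2.1) (h2.2 r1 h1.1)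

lemma adj_anc {x y : V} (hx : x ∈ S) (hy : y ∈ S) (hadj : G.Adj x y) :
    IsAnc T.parent x y ∨ IsAnc T.parent y x := by
  have hne : T.num x ≠ T.num y := fun h => hadj.ne (T.num_inj h)
  rcases lt_or_gt_of_ne hne with h | h
  · left
    exact (T.subtree_interval x hx y hy).mpr ⟨le_of_lt h, T.dfs_prop x hx y hy hadj h⟩
  · right
    exact (T.subtree_interval y hy x hx).mpr ⟨le_of_lt h, T.dfs_prop y hy x hx hadj.symm h⟩

end Tlem
end CG
namespace CG
open Relation
section Tlem2
variable {V : Type*} [Fintype V] {G : SimpleGraph V} {S : Set V} {r : V}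
  (T : DFSTreeOn G S r) {X : Set V}

lemma backE_parts {C : Set V} (hC : IsCompOn T.parent S X C)
    {x y : V} (hx : x ∈ C) (hy' : y ∈ S) (hy'' : y ∉ X) (hyC : y ∉ C)
    (hadj : G.Adj x y) : T.parent x ≠ y ∧ T.parent y ≠ x := by
  have hxp := comp_mem hC hx
  have hne : x ≠ y := fun h => hyC (h ▸ hx)
  constructor
  · intro hpx
    exact hyC (comp_mem_of_reach hC hx
      ((delT_adj.mpr ⟨hne, hxp.1, hy', hxp.2, hy'', Or.inl hpx⟩) :
        (delVerts (treeGraphOn T.parent S) X).Adj x y).reachable.symm)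
  · intro hpy
    exact hyC (comp_mem_of_reach hC hx
      ((delT_adj.mpr ⟨hne, hxp.1, hy', hxp.2, hy'', Or.inr hpy⟩) :
        (delVerts (treeGraphOn T.parent S) X).Adj x y).reachable.symm)

lemma backE_symm {A B : Set V} {q : V → V} {G' : SimpleGraph V}
    (h : BackE G' q A B) : BackE G' q B A := by
  obtain ⟨x, hx, y, hy, hadj, h1, h2⟩ := h
  exact ⟨y, hy, x, hx, hadj.symm, h2, h1⟩

lemma hang_edge {H : Set V} (hH : IsHang T.parent S X H) {rH : V}
    (hrH1 : rH ∈ H) (hrH2 : ∀ u ∈ H, CTop T.parent S X rH u)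
    {x y : V} (hx : x ∈ H) (hy : y ∉ H) (hyS : y ∈ S) (hyX : y ∉ X)
    (hadj : G.Adj x y) :
    IsAnc T.parent y rH ∧ y ≠ rH ∧ T.parent rH ∈ X ∧ IsAnc T.parent y (T.parent rH) := by
  have hxp := comp_mem hH.1 hx
  rcases adj_anc T hxp.1 hyS hadj with hxy | hyx
  · -- x is an ancestor of y : contradiction with H hanging
    exfalso
    obtain ⟨ty, hty⟩ := exists_ctop T hyS hyX (X := X)
    rcases chain_comp (R1 := CStep T.parent S X) (R2 := fun a b => T.parent a = b)
        T.parent (fun _ _ hs => hs.1.symm) (fun _ _ hs => hs.symm) hty.1 hxy with hc | hc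
    · -- IsAnc x ty
      by_cases hxty : x = ty
      · exact hy (comp_mem_of_reach hH.1 hx (hxty ▸ (clean_reach hty.1)))
      · have hstrict : IsAnc T.parent x (T.parent ty) := anc_strict_step hc hxty
        rcases hty.2 with hs | hs
        · exact hH.2 ⟨T.parent ty, hs, x, hx, hstrict⟩
        · exact hxty (anc_of_anc_root hs hc)
    · -- Clean ty x, so x and y are in the same component
      exact hy (comp_mem_of_reach hH.1 hx
        ((clean_reach hty.1).trans (clean_reach hc).symm))
  · -- y is an ancestor of x
    have htop := hrH2 x hx
    rcases chain_comp (R1 := CStep T.parent S X) (R2 := fun a b => T.parent a = b)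
        T.parent (fun _ _ hs => hs.1.symm) (fun _ _ hs => hs.symm) htop.1 hyx with hc | hc
    · -- IsAnc y rH
      have hne : y ≠ rH := fun h => hy (h ▸ hrH1)
      have hpX : T.parent rH ∈ X := by
        rcases htop.2 with hs | hs
        · exact hs
        · exact absurd (anc_of_anc_root hs hc) hne
      exact ⟨hc, hne, hpX, anc_strict_step hc hne⟩
    · -- Clean rH y : same component
      exact absurd (comp_mem_of_reach hH.1 hrH1 (clean_reach hc)) hy

lemma exists_Ck {H : Set V} (hH : IsHang T.parent S X H)
    (hne : ∃ C0, IsIntC T.parent S X C0 ∧ BackE G T.parent H C0) :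
    ∃ Ck rk, IsIntC T.parent S X Ck ∧ IsRootOf T.parent Ck rk ∧
      BackE G T.parent H Ck ∧
      ∀ C', IsIntC T.parent S X C' → BackE G T.parent H C' → CompAnc T.parent Ck C' := by
  classical
  obtain ⟨rH, hrH1, hrH2, hrHroot, hrHstop⟩ := comp_root T hH.1
  set Y : Set V := {y | IsAnc T.parent y rH ∧ y ≠ rH ∧ y ∈ S ∧ y ∉ X ∧
    ∃ x ∈ H, G.Adj x y} with hYdef
  have attach : ∀ C', IsIntC T.parent S X C' → BackE G T.parent H C' →
      ∃ y, y ∈ Y ∧ y ∈ C' := by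
    intro C' hC' hB
    obtain ⟨x, hx, y, hy, hadj, -, -⟩ := hB
    have hyp := comp_mem hC'.1 hy
    have hHC : H ≠ C' := fun h => hH.2 (h ▸ hC'.2)
    have hyH : y ∉ H := fun h => hHC (comp_eq hH.1 hC'.1 h hy)
    obtain ⟨h1, h2, h3, h4⟩ := hang_edge T hH hrH1 hrH2 hx hyH hyp.1 hyp.2 hadj
    exact ⟨y, ⟨h1, h2, hyp.1, hyp.2, x, hx, hadj⟩, hy⟩
  obtain ⟨C0, hC0, hB0⟩ := hne
  obtain ⟨y0, hy0, -⟩ := attach C0 hC0 hB0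
  obtain ⟨ys, hysY, hysmin⟩ := Set.exists_min_image Y T.num (Set.toFinite Y) ⟨y0, hy0⟩
  obtain ⟨hys1, hys2, hys3, hys4, xs, hxs, hadjs⟩ := hysY
  have hanc_all : ∀ y ∈ Y, IsAnc T.parent ys y := by
    intro y hyY
    rcases anc_comparable hys1 hyY.1 with h | h
    · exact h
    · have q := anc_num T hys3 h
      have : y = ys := T.num_inj (le_antisymm q.2 (hysmin y hyY))
      exact this ▸ isAnc_refl
  set Ck : Set V := {u | (delVerts (treeGraphOn T.parent S) X).Reachable u ys} with hCkdef
  have hCkcomp : IsCompOn T.parent S X Ck := ⟨ys, hys3, hys4, rfl⟩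
  have hysCk : ys ∈ Ck := SimpleGraph.Reachable.refl _
  have hpX : T.parent rH ∈ X := by
    rcases hrHstop with hs | hs
    · exact hs
    · exfalso
      have hproot : T.parent rH = rH := by rw [hs, T.parent_root]
      exact hys2 (anc_of_anc_root hproot hys1)
  have hCkint : IsInternal T.parent X Ck :=
    ⟨T.parent rH, hpX, ys, hysCk, anc_strict_step hys1 hys2⟩
  obtain ⟨rk, hrk1, hrk2, hrkroot, -⟩ := comp_root T hCkcomp
  have hysH : ys ∉ H := by
    intro h
    have := comp_eq hH.1 hCkcomp h hysCk
    exact hH.2 (this ▸ hCkint)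
  have hB : BackE G T.parent H Ck := by
    obtain ⟨h1, h2⟩ := backE_parts T hCkcomp hysCk (comp_mem hH.1 hxs).1
      (comp_mem hH.1 hxs).2 (fun hc => hysH (comp_eq hCkcomp hH.1 hc hxs ▸ hysCk))
      hadjs.symm
    exact ⟨xs, hxs, ys, hysCk, hadjs, h2, h1⟩
  refine ⟨Ck, rk, ⟨hCkcomp, hCkint⟩, hrkroot, hB, ?_⟩
  intro C' hC' hB'
  obtain ⟨y', hy'Y, hy'C⟩ := attach C' hC' hB'
  exact ⟨ys, hysCk, y', hy'C, hanc_all y' hy'Y⟩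

end Tlem2
end CG
namespace CG
open Relation

/-- The M-vertices attached to a hanging subtree `H`. -/
def MAt {V : Type*} (G : SimpleGraph V) (p : V → V) (S X U : Set V) (H : Set V)
    (m : V) : Prop :=
  (∃ C, IsIntC p S X C ∧ IsRootOf p C m ∧ BackE G p H C) ∨ (m ∈ U ∧ EdgeToSet G m H)

/-- `m` is an M-vertex associated to the vertex `x`. -/
def RepV {V : Type*} (G : SimpleGraph V) (p : V → V) (S X U : Set V) (x m : V) : Prop :=
  (x ∈ U ∧ m = x) ∨ (∃ C, IsIntC p S X C ∧ x ∈ C ∧ IsRootOf p C m) ∨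
  (∃ H, IsHang p S X H ∧ x ∈ H ∧ MAt G p S X U H m)

section Glem
variable {V : Type*} [Fintype V] {G : SimpleGraph V} {Dhat D : Set V} {r : V}
  (T : DFSTreeOn G Dhatᶜ r)

lemma notD {v : V} (hS : v ∈ (Dhatᶜ : Set V)) (hX : v ∉ D \ Dhat) : v ∉ D :=
  fun hD => hX ⟨hD, hS⟩

lemma comp_notD {C : Set V} (hC : IsCompOn T.parent Dhatᶜ (D \ Dhat) C) {u : V}
    (hu : u ∈ C) : u ∉ D :=
  notD (comp_mem hC hu).1 (comp_mem hC hu).2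

lemma delT_to_delD {u w : V}
    (h : (delVerts (treeGraphOn T.parent Dhatᶜ) (D \ Dhat)).Reachable u w) :
    (delVerts G D).Reachable u w := by
  rw [SimpleGraph.reachable_iff_reflTransGen] at h
  induction h with
  | refl => exact SimpleGraph.Reachable.refl _
  | @tail m w _ h2 ih =>
    obtain ⟨hne, hmS, hwS, hmX, hwX, hor⟩ := delT_adj.mp h2
    have hadj : G.Adj m w := by
      rcases hor with hp | hp
      · have hmr : m ≠ r := by
          intro hmr; rw [hmr, T.parent_root] at hp; exact hne (hmr.trans hp)
        exact hp ▸ (T.parent_adj m hmS hmr).symm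
      · have hwr : w ≠ r := by
          intro hwr; rw [hwr, T.parent_root] at hp; exact hne (hp.symm.trans hwr.symm)
        exact hp ▸ (T.parent_adj w hwS hwr)
    exact ih.trans (delG_adj.mpr ⟨hadj, notD hmS hmX, notD hwS hwX⟩).reachable

lemma comp_reach {C : Set V} (hC : IsCompOn T.parent Dhatᶜ (D \ Dhat) C)
    {u w : V} (hu : u ∈ C) (hw : w ∈ C) : (delVerts G D).Reachable u w := by
  obtain ⟨v, hvS, hvX, rfl⟩ := hC
  exact (delT_to_delD T hu).trans (delT_to_delD T hw).symm

lemma estep {x y : V} (hadj : G.Adj x y) (hx : x ∉ D) (hy : y ∉ D) :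
    (delVerts G D).Reachable x y :=
  (delG_adj.mpr ⟨hadj, hx, hy⟩).reachable

lemma uNotD {u : V} (hu : u ∈ Dhat \ D) : u ∉ D := hu.2

lemma mrel_reach {a b : V}
    (h : MRel G T.parent Dhatᶜ (D \ Dhat) (Dhat \ D) a b) :
    (delVerts G D).Reachable a b := by
  rcases h with ⟨C1, C2, hC1, hC2, hr1, hr2, x, hx, y, hy, hadj, -, -⟩ |
    ⟨H, Ck, Ci, hH, hCk, hCi, hrk, hri, ⟨x1, hx1, y1, hy1, hadj1, -, -⟩,
      ⟨x2, hx2, y2, hy2, hadj2, -, -⟩, -⟩ |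
    ⟨ha, hb, hadj⟩ | ⟨C, hC, hroot, hbU, x, hxC, hadj⟩ |
    ⟨ha, hb, H, hH, ⟨x1, hx1, hadj1⟩, ⟨x2, hx2, hadj2⟩⟩ |
    ⟨C, H, hC, hroot, hH, ⟨x, hxC, y, hyH, hadj, -, -⟩, hbU, ⟨x2, hx2, hadj2⟩⟩
  · exact ((comp_reach T hC1.1 hr1.1 hx).trans
      (estep hadj (comp_notD T hC1.1 hx) (comp_notD T hC2.1 hy))).trans
      (comp_reach T hC2.1 hy hr2.1)
  · refine (comp_reach T hCk.1 hrk.1 hy1).trans ?_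
    refine (estep hadj1.symm (comp_notD T hCk.1 hy1) (comp_notD T hH.1 hx1)).trans ?_
    refine (comp_reach T hH.1 hx1 hx2).trans ?_
    refine (estep hadj2 (comp_notD T hH.1 hx2) (comp_notD T hCi.1 hy2)).trans ?_
    exact comp_reach T hCi.1 hy2 hri.1
  · exact estep hadj ha.2 hb.2
  · exact (comp_reach T hC.1 hroot.1 hxC).trans
      (estep hadj.symm (comp_notD T hC.1 hxC) hbU.2)
  · exact ((estep hadj1 ha.2 (comp_notD T hH.1 hx1)).trans
      (comp_reach T hH.1 hx1 hx2)).trans (estep hadj2.symm (comp_notD T hH.1 hx2) hb.2)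
  · refine (comp_reach T hC.1 hroot.1 hxC).trans ?_
    refine (estep hadj (comp_notD T hC.1 hxC) (comp_notD T hH.1 hyH)).trans ?_
    refine (comp_reach T hH.1 hyH hx2).trans ?_
    exact estep hadj2.symm (comp_notD T hH.1 hx2) hbU.2

lemma mgraph_to_delD {a b : V}
    (h : (MGraph G T.parent Dhatᶜ (D \ Dhat) (Dhat \ D)).Reachable a b) :
    (delVerts G D).Reachable a b := by
  rw [SimpleGraph.reachable_iff_reflTransGen] at h
  induction h with
  | refl => exact SimpleGraph.Reachable.refl _
  | @tail m w _ h2 ih =>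
    rcases (SimpleGraph.fromRel_adj _ _ _).mp h2 with ⟨-, h | h⟩
    · exact ih.trans (mrel_reach T h)
    · exact ih.trans (mrel_reach T h).symm

lemma medge {a b : V} (h : MRel G T.parent Dhatᶜ (D \ Dhat) (Dhat \ D) a b)
    (hne : a ≠ b) : (MGraph G T.parent Dhatᶜ (D \ Dhat) (Dhat \ D)).Reachable a b :=
  ((SimpleGraph.fromRel_adj _ _ _).mpr ⟨hne, Or.inl h⟩).reachable

lemma root_ne_u {C : Set V} (hC : IsCompOn T.parent Dhatᶜ (D \ Dhat) C) {m u : V}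
    (hm : m ∈ C) (hu : u ∈ Dhat \ D) : m ≠ u :=
  fun h => (comp_mem hC hm).1 (h ▸ hu.1)

lemma mattach_conn {H : Set V} (hH : IsHang T.parent Dhatᶜ (D \ Dhat) H) {m m' : V}
    (h1 : MAt G T.parent Dhatᶜ (D \ Dhat) (Dhat \ D) H m)
    (h2 : MAt G T.parent Dhatᶜ (D \ Dhat) (Dhat \ D) H m') :
    (MGraph G T.parent Dhatᶜ (D \ Dhat) (Dhat \ D)).Reachable m m' := by
  rcases h1 with ⟨C1, hC1, hr1, hB1⟩ | ⟨hU1, hE1⟩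
  · rcases h2 with ⟨C2, hC2, hr2, hB2⟩ | ⟨hU2, hE2⟩
    · -- two internal components: go through Ck
      obtain ⟨Ck, rk, hCk, hrk, hBk, hall⟩ := exists_Ck T hH ⟨C1, hC1, hB1⟩
      have e1 : (MGraph G T.parent Dhatᶜ (D \ Dhat) (Dhat \ D)).Reachable rk m := by
        by_cases h : rk = m
        · exact h ▸ SimpleGraph.Reachable.refl _
        · exact medge T (Or.inr (Or.inl
            ⟨H, Ck, C1, hH, hCk, hC1, hrk, hr1, hBk, hB1, hall⟩)) h
      have e2 : (MGraph G T.parent Dhatᶜ (D \ Dhat) (Dhat \ D)).Reachable rk m' := by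
        by_cases h : rk = m'
        · exact h ▸ SimpleGraph.Reachable.refl _
        · exact medge T (Or.inr (Or.inl
            ⟨H, Ck, C2, hH, hCk, hC2, hrk, hr2, hBk, hB2, hall⟩)) h
      exact e1.symm.trans e2
    · exact medge T (Or.inr (Or.inr (Or.inr (Or.inr (Or.inr
        ⟨C1, H, hC1, hr1, hH, backE_symm hB1, hU2, hE2⟩)))))
        (root_ne_u T hC1.1 hr1.1 hU2)
  · rcases h2 with ⟨C2, hC2, hr2, hB2⟩ | ⟨hU2, hE2⟩
    · exact (medge T (Or.inr (Or.inr (Or.inr (Or.inr (Or.inr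
        ⟨C2, H, hC2, hr2, hH, backE_symm hB2, hU1, hE1⟩)))))
        (root_ne_u T hC2.1 hr2.1 hU1)).symm
    · by_cases h : m = m'
      · exact h ▸ SimpleGraph.Reachable.refl _
      · exact medge T (Or.inr (Or.inr (Or.inr (Or.inr (Or.inl
          ⟨hU1, hU2, H, hH, hE1, hE2⟩))))) h

end Glem
end CG
namespace CG
open Relation
section MainLem
variable {V : Type*} [Fintype V] {G : SimpleGraph V} {Dhat D : Set V} {r : V}
  (T : DFSTreeOn G Dhatᶜ r)

lemma rep_step {x y : V} (hadj : (delVerts G D).Adj x y) {m : V}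
    (hrep : RepV G T.parent Dhatᶜ (D \ Dhat) (Dhat \ D) x m) :
    ∃ m', RepV G T.parent Dhatᶜ (D \ Dhat) (Dhat \ D) y m' ∧
      (MGraph G T.parent Dhatᶜ (D \ Dhat) (Dhat \ D)).Reachable m m' := by
  obtain ⟨hGadj, hxD, hyD⟩ := delG_adj.mp hadj
  by_cases hyDhat : y ∈ Dhat
  · -- y is a vertex of U
    have hyU : y ∈ Dhat \ D := ⟨hyDhat, hyD⟩
    rcases hrep with ⟨hxU, rfl⟩ | ⟨Cx, hCx, hxCx, hrootm⟩ | ⟨Hx, hHx, hxHx, hMAt⟩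
    · refine ⟨y, Or.inl ⟨hyU, rfl⟩, ?_⟩
      by_cases h : m = y
      · exact h ▸ SimpleGraph.Reachable.refl _
      · exact medge T (Or.inr (Or.inr (Or.inl ⟨hxU, hyU, hGadj⟩))) h
    · exact ⟨y, Or.inl ⟨hyU, rfl⟩,
        medge T (Or.inr (Or.inr (Or.inr (Or.inl
          ⟨Cx, hCx, hrootm, hyU, x, hxCx, hGadj.symm⟩))))
          (root_ne_u T hCx.1 hrootm.1 hyU)⟩
    · exact ⟨y, Or.inl ⟨hyU, rfl⟩,
        mattach_conn T hHx hMAt (Or.inr ⟨hyU, x, hxHx, hGadj.symm⟩)⟩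
  · -- y lies in a component Cy of the forest
    have hyS : y ∈ (Dhatᶜ : Set V) := hyDhat
    have hyX : y ∉ D \ Dhat := fun h => hyD h.1
    set Cy : Set V :=
      {u | (delVerts (treeGraphOn T.parent Dhatᶜ) (D \ Dhat)).Reachable u y} with hCydef
    have hCy : IsCompOn T.parent Dhatᶜ (D \ Dhat) Cy := ⟨y, hyS, hyX, rfl⟩
    have hyCy : y ∈ Cy := SimpleGraph.Reachable.refl _
    rcases hrep with ⟨hxU, rfl⟩ | ⟨Cx, hCx, hxCx, hrootm⟩ | ⟨Hx, hHx, hxHx, hMAt⟩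
    · -- x ∈ U
      by_cases hInt : IsInternal T.parent (D \ Dhat) Cy
      · obtain ⟨my, -, -, hmyroot, -⟩ := comp_root T hCy
        exact ⟨my, Or.inr (Or.inl ⟨Cy, ⟨hCy, hInt⟩, hyCy, hmyroot⟩),
          (medge T (Or.inr (Or.inr (Or.inr (Or.inl
            ⟨Cy, ⟨hCy, hInt⟩, hmyroot, hxU, y, hyCy, hGadj⟩))))
            (root_ne_u T hCy hmyroot.1 hxU)).symm⟩
      · exact ⟨m, Or.inr (Or.inr ⟨Cy, ⟨hCy, hInt⟩, hyCy,
          Or.inr ⟨hxU, y, hyCy, hGadj⟩⟩), SimpleGraph.Reachable.refl _⟩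
    · -- x in an internal component Cx with root m
      by_cases hyCx : y ∈ Cx
      · exact ⟨m, Or.inr (Or.inl ⟨Cx, hCx, hyCx, hrootm⟩), SimpleGraph.Reachable.refl _⟩
      · obtain ⟨hpx, hpy⟩ := backE_parts T hCx.1 hxCx hyS hyX hyCx hGadj
        have hB : BackE G T.parent Cx Cy := ⟨x, hxCx, y, hyCy, hGadj, hpx, hpy⟩
        by_cases hInt : IsInternal T.parent (D \ Dhat) Cy
        · obtain ⟨my, hmyCy, -, hmyroot, -⟩ := comp_root T hCy
          refine ⟨my, Or.inr (Or.inl ⟨Cy, ⟨hCy, hInt⟩, hyCy, hmyroot⟩),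
            medge T (Or.inl ⟨Cx, Cy, hCx, ⟨hCy, hInt⟩, hrootm, hmyroot, hB⟩) ?_⟩
          intro h
          exact hyCx (comp_eq hCy hCx.1 (h ▸ hmyCy) hrootm.1 ▸ hyCy)
        · exact ⟨m, Or.inr (Or.inr ⟨Cy, ⟨hCy, hInt⟩, hyCy,
            Or.inl ⟨Cx, hCx, hrootm, backE_symm hB⟩⟩), SimpleGraph.Reachable.refl _⟩
    · -- x in a hanging subtree Hx
      by_cases hyHx : y ∈ Hx
      · exact ⟨m, Or.inr (Or.inr ⟨Hx, hHx, hyHx, hMAt⟩), SimpleGraph.Reachable.refl _⟩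
      · obtain ⟨rH, hrH1, hrH2, -, -⟩ := comp_root T hHx.1
        obtain ⟨-, -, hpX, hancp⟩ := hang_edge T hHx hrH1 hrH2 hxHx hyHx hyS hyX hGadj
        have hInt : IsInternal T.parent (D \ Dhat) Cy := ⟨T.parent rH, hpX, y, hyCy, hancp⟩
        obtain ⟨hpx, hpy⟩ := backE_parts T hCy hyCy (comp_mem hHx.1 hxHx).1
          (comp_mem hHx.1 hxHx).2 (fun hc => hyHx (comp_eq hCy hHx.1 hc hxHx ▸ hyCy))
          hGadj.symm
        have hB : BackE G T.parent Hx Cy := ⟨x, hxHx, y, hyCy, hGadj, hpy, hpx⟩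
        obtain ⟨my, -, -, hmyroot, -⟩ := comp_root T hCy
        exact ⟨my, Or.inr (Or.inl ⟨Cy, ⟨hCy, hInt⟩, hyCy, hmyroot⟩),
          mattach_conn T hHx hMAt (Or.inl ⟨Cy, ⟨hCy, hInt⟩, hmyroot, hB⟩)⟩

lemma forward_walk {x y : V} (h : (delVerts G D).Reachable x y) {m : V}
    (hrep : RepV G T.parent Dhatᶜ (D \ Dhat) (Dhat \ D) x m) :
    ∃ m', RepV G T.parent Dhatᶜ (D \ Dhat) (Dhat \ D) y m' ∧
      (MGraph G T.parent Dhatᶜ (D \ Dhat) (Dhat \ D)).Reachable m m' := by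
  rw [SimpleGraph.reachable_iff_reflTransGen] at h
  induction h with
  | refl => exact ⟨m, hrep, SimpleGraph.Reachable.refl _⟩
  | tail _ h2 ih =>
    obtain ⟨m1, rep1, r1⟩ := ih
    obtain ⟨m2, rep2, r2⟩ := rep_step T h2 rep1
    exact ⟨m2, rep2, r1.trans r2⟩

lemma rep_start {A : Set V} {a x : V}
    (hA : IsRep T.parent Dhatᶜ (D \ Dhat) (Dhat \ D) A a) (hx : x ∈ A) :
    RepV G T.parent Dhatᶜ (D \ Dhat) (Dhat \ D) x a := by
  rcases hA with ⟨hAint, hAroot⟩ | ⟨haU, rfl⟩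
  · exact Or.inr (Or.inl ⟨A, hAint, hx, hAroot⟩)
  · have hxa : x = a := hx
    subst hxa
    exact Or.inl ⟨haU, rfl⟩

lemma rep_mem {A : Set V} {a : V}
    (hA : IsRep T.parent Dhatᶜ (D \ Dhat) (Dhat \ D) A a) : a ∈ A := by
  rcases hA with ⟨-, hAroot⟩ | ⟨-, rfl⟩
  · exact hAroot.1
  · exact rfl

lemma rep_end {A : Set V} {a y m : V}
    (hA : IsRep T.parent Dhatᶜ (D \ Dhat) (Dhat \ D) A a) (hy : y ∈ A)
    (hrep : RepV G T.parent Dhatᶜ (D \ Dhat) (Dhat \ D) y m) : m = a := by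
  rcases hA with ⟨hAint, hAroot⟩ | ⟨haU, rfl⟩
  · rcases hrep with ⟨hyU, rfl⟩ | ⟨C, hC, hyC, hrootm⟩ | ⟨H, hH, hyH, -⟩
    · exact absurd hyU.1 (comp_mem hAint.1 hy).1
    · exact root_unique T hAint.1 (comp_eq hC.1 hAint.1 hyC hy ▸ hrootm) hAroot
    · exact absurd (comp_eq hH.1 hAint.1 hyH hy ▸ hAint.2) hH.2
  · have hya : y = a := hy
    subst hya
    rcases hrep with ⟨-, rfl⟩ | ⟨C, hC, hyC, -⟩ | ⟨H, hH, hyH, -⟩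
    · rfl
    · exact absurd haU.1 (comp_mem hC.1 hyC).1
    · exact absurd haU.1 (comp_mem hH.1 hyH).1

end MainLem
end CG
/-- Correctness of the connectivity graph `M`: for `S`, `S'` each an internal component of
`T \ (D \ D̂)` or a vertex of `D̂ \ D`, they are connected in `G \ D` if and only if their
representative vertices are connected in `M`. -/
theorem connectivity_graph_correct {V : Type*} [Fintype V] [DecidableEq V]
    (G : SimpleGraph V) (Dhat D : Set V) (r : V)
    (hconn : ∀ u ∉ Dhat, ∀ v ∉ Dhat, (delVerts G Dhat).Reachable u v)
    (hr : r ∉ D) (T : DFSTreeOn G Dhatᶜ r)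
    (A A' : Set V) (a a' : V)
    (hA : IsRep T.parent Dhatᶜ (D \ Dhat) (Dhat \ D) A a)
    (hA' : IsRep T.parent Dhatᶜ (D \ Dhat) (Dhat \ D) A' a') :
    (∃ x ∈ A, ∃ y ∈ A', (delVerts G D).Reachable x y) ↔
      (MGraph G T.parent Dhatᶜ (D \ Dhat) (Dhat \ D)).Reachable a a' := by
  constructor
  · rintro ⟨x, hx, y, hy, hreach⟩
    obtain ⟨m, hrepy, hMr⟩ := CG.forward_walk T hreach (CG.rep_start T hA hx)
    exact (CG.rep_end T hA' hy hrepy) ▸ hMr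
  · intro h
    exact ⟨a, CG.rep_mem T hA, a', CG.rep_mem T hA', CG.mgraph_to_delD T h⟩
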